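/- Fix n ≥ 1 and c ∈ ℝ. Let L = {(z, ζu) ∈ ℂ × ℂⁿ : |ζ|² = n(|z|²−1), Re(z·ζⁿ) = 0, u ∈ S^{n−1}}. At every point of L where |z| > 1 and z ≠ 0 the defining equations |ζ|² − n(|z|²−1) = 0 and Re(zζⁿ) = 0 have linearly independent differentials on the set μ⁻¹(0) parametrized by (z, ζ, u), and the corresponding surface Σ = {(z,ζ) ∈ ℂ² : |ζ|² = n(|z|²−1), Re(zζⁿ) = 0} is, at such points, an integral surface of both Ψ₁ = (i/2)(dz∧dz̄ + dζ∧dζ̄) and Ψ₂ = Im(dz ∧ d(ζⁿ)). -/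

import Mathlib

section helpers

private lemma re_conj_mul (u w : ℂ) :
    ((starRingEnd ℂ) u * (u * w)).re = Complex.normSq u * w.re := by
  simp [Complex.mul_re, Complex.mul_im, Complex.normSq_apply]
  ring

private lemma im_conj_mul (u v w : ℂ) :
    ((starRingEnd ℂ) (u * v) * (u * w)).im =
      Complex.normSq u * (v.re * w.im - v.im * w.re) := by
  simp [Complex.mul_re, Complex.mul_im, Complex.normSq_apply]
  ring

end helpers

/-- on L = {(z,ζu) : |ζ|² = n(|z|²−1), Re(zζⁿ) = 0, u ∈ S^{n−1}},
at points with |z| > 1 and z ≠ 0, the differentials of g₁ = |ζ|² − n(|z|²−1) and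
g₂ = Re(zζⁿ) (acting on a tangent vector (a,b) of ℂ² as
dg₁(a,b) = 2Re(ζ̄b) − 2nRe(z̄a), dg₂(a,b) = Re(ζⁿa) + Re(nzζ^{n−1}b)) are
linearly independent, and Ψ₁ = (i/2)(dz∧dz̄ + dζ∧dζ̄) and Ψ₂ = Im(dz∧d(ζⁿ))
vanish on ker dg₁ ∩ ker dg₂, i.e. Σ is an integral surface of Ψ₁ and Ψ₂. -/
theorem stmt15 (n : ℕ) (hn : 1 ≤ n) (c : ℝ) (z ζ : ℂ)
    (h1 : ‖ζ‖ ^ 2 = n * (‖z‖ ^ 2 - 1))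
    (h2 : (z * ζ ^ n).re = 0) (hz : 1 < ‖z‖) (hz0 : z ≠ 0) :
    (∀ s t : ℝ,
      (∀ a b : ℂ,
        s * (2 * ((starRingEnd ℂ) ζ * b).re - 2 * n * ((starRingEnd ℂ) z * a).re) +
          t * ((ζ ^ n * a).re + ((n : ℂ) * z * ζ ^ (n-1) * b).re) = 0) →
      s = 0 ∧ t = 0) ∧
    (∀ a b a' b' : ℂ,
      2 * ((starRingEnd ℂ) ζ * b).re - 2 * n * ((starRingEnd ℂ) z * a).re = 0 →
      2 * ((starRingEnd ℂ) ζ * b').re - 2 * n * ((starRingEnd ℂ) z * a').re = 0 →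
      (ζ ^ n * a).re + ((n : ℂ) * z * ζ ^ (n-1) * b).re = 0 →
      (ζ ^ n * a').re + ((n : ℂ) * z * ζ ^ (n-1) * b').re = 0 →
      ((starRingEnd ℂ) a * a').im + ((starRingEnd ℂ) b * b').im = 0 ∧
      (((n : ℂ) * ζ ^ (n-1) * (a * b' - a' * b)).im = 0)) := by
  obtain ⟨m, rfl⟩ : ∃ m, n = m + 1 := ⟨n - 1, (Nat.succ_pred_eq_of_pos hn).symm⟩
  simp only [Nat.add_sub_cancel] at *
  have hrz : 1 < Complex.normSq z := by
    rw [← Complex.sq_norm]; nlinarith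
  have hq : Complex.normSq ζ = ((m : ℝ) + 1) * (Complex.normSq z - 1) := by
    rw [← Complex.sq_norm, ← Complex.sq_norm]
    push_cast at h1 ⊢; linarith
  have hq0 : 0 < Complex.normSq ζ := by
    rw [hq]
    have hm : (0:ℝ) ≤ (m:ℝ) := Nat.cast_nonneg m
    nlinarith
  have hζ0 : ζ ≠ 0 := by
    intro h; rw [h] at hq0; simp at hq0
  have hzz : ((starRingEnd ℂ) z * z).re = Complex.normSq z := by
    simp [Complex.mul_re, Complex.normSq_apply]
  constructor
  · -- linear independence
    intro s t h
    have hs := h z 0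
    rw [mul_zero, mul_zero] at hs
    simp only [Complex.zero_re, mul_zero, add_zero] at hs
    rw [hzz, mul_comm (ζ ^ (m+1)) z, h2] at hs
    have hs0 : s = 0 := by
      have : s * (2 * 0 - 2 * ((m:ℝ)+1) * Complex.normSq z) = 0 := by
        push_cast at hs ⊢; linarith
      have h2' : 2 * 0 - 2 * ((m:ℝ)+1) * Complex.normSq z ≠ 0 := by nlinarith
      exact (mul_eq_zero.mp this).resolve_right h2'
    subst hs0
    refine ⟨rfl, ?_⟩
    have ht := h ((starRingEnd ℂ) (ζ ^ (m+1))) 0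
    rw [mul_zero, mul_zero] at ht
    simp only [Complex.zero_re, mul_zero, add_zero, zero_mul, zero_add, zero_sub] at ht
    have hpow : (ζ ^ (m+1) * (starRingEnd ℂ) (ζ ^ (m+1))).re
        = Complex.normSq (ζ ^ (m+1)) := by
      rw [Complex.mul_conj, Complex.ofReal_re]
    rw [hpow] at ht
    have hp0 : 0 < Complex.normSq (ζ ^ (m+1)) := by
      have : ζ ^ (m+1) ≠ 0 := pow_ne_zero _ hζ0
      exact Complex.normSq_pos.mpr this
    exact (mul_eq_zero.mp ht).resolve_right (ne_of_gt hp0)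
  · -- integral surface
    intro a b a' b' H1 H1' H2 H2'
    set P : ℂ := z * ζ ^ (m+1) with hPdef
    have hPre : P.re = 0 := h2
    have hPim : P.im ≠ 0 := by
      intro h
      have : P ≠ 0 := mul_ne_zero hz0 (pow_ne_zero _ hζ0)
      exact this (Complex.ext hPre h)
    obtain ⟨A, rfl⟩ : ∃ A, a = z * A := ⟨a / z, by field_simp⟩
    obtain ⟨A', rfl⟩ : ∃ A', a' = z * A' := ⟨a' / z, by field_simp⟩
    obtain ⟨B, rfl⟩ : ∃ B, b = ζ * B := ⟨b / ζ, by field_simp⟩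
    obtain ⟨B', rfl⟩ : ∃ B', b' = ζ * B' := ⟨b' / ζ, by field_simp⟩
    rw [re_conj_mul, re_conj_mul] at H1 H1'
    push_cast at H1 H1'
    have e1 : Complex.normSq ζ * B.re = ((m:ℝ)+1) * (Complex.normSq z * A.re) := by
      linarith
    have e1' : Complex.normSq ζ * B'.re = ((m:ℝ)+1) * (Complex.normSq z * A'.re) := by
      linarith
    -- rewrite H2, H2'
    have c1 : ζ ^ (m+1) * (z * A) = P * A := by rw [hPdef]; ring
    have c1' : ζ ^ (m+1) * (z * A') = P * A' := by rw [hPdef]; ring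
    have c2 : ((m+1 : ℕ) : ℂ) * z * ζ ^ m * (ζ * B) = ((m+1 : ℕ) : ℂ) * (P * B) := by
      rw [hPdef, pow_succ]; ring
    have c2' : ((m+1 : ℕ) : ℂ) * z * ζ ^ m * (ζ * B') = ((m+1 : ℕ) : ℂ) * (P * B') := by
      rw [hPdef, pow_succ]; ring
    rw [c1, c2] at H2
    rw [c1', c2'] at H2'
    simp only [Complex.mul_re, Complex.natCast_re, Complex.natCast_im, hPre,
      zero_mul, mul_zero, zero_sub, sub_zero] at H2 H2'
    push_cast at H2 H2'
    have e2 : A.im + ((m:ℝ)+1) * B.im = 0 := by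
      have : P.im * (A.im + ((m:ℝ)+1) * B.im) = 0 := by linarith [H2]; 
      exact (mul_eq_zero.mp this).resolve_left hPim
    have e2' : A'.im + ((m:ℝ)+1) * B'.im = 0 := by
      have : P.im * (A'.im + ((m:ℝ)+1) * B'.im) = 0 := by linarith [H2']
      exact (mul_eq_zero.mp this).resolve_left hPim
    have hnn : ((m:ℝ)+1) ≠ 0 := by positivity
    constructor
    · rw [im_conj_mul, im_conj_mul]
      have hT : ((m:ℝ)+1) *
          (Complex.normSq z * (A.re * A'.im - A.im * A'.re) +
           Complex.normSq ζ * (B.re * B'.im - B.im * B'.re)) = 0 := by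
        linear_combination (-(A'.im)) * e1 + A.im * e1'
          + Complex.normSq ζ * B.re * e2' - Complex.normSq ζ * B'.re * e2
      exact (mul_eq_zero.mp hT).resolve_left hnn
    · have c3 : ((m+1 : ℕ) : ℂ) * ζ ^ m * (z * A * (ζ * B') - z * A' * (ζ * B))
          = ((m+1 : ℕ) : ℂ) * (P * (A * B' - A' * B)) := by
        rw [hPdef, pow_succ]; ring
      rw [c3]
      have hD : (A * B' - A' * B).re = 0 := by
        have hE : ((m:ℝ)+1) * Complex.normSq z * ((A * B' - A' * B).re) = 0 := by
          simp only [Complex.sub_re, Complex.mul_re]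
          linear_combination (-(B'.re)) * e1 + B.re * e1'
            - (((m:ℝ)+1) * Complex.normSq z * B'.im) * e2
            + (((m:ℝ)+1) * Complex.normSq z * B.im) * e2'
        have hnr : ((m:ℝ)+1) * Complex.normSq z ≠ 0 := by positivity
        exact (mul_eq_zero.mp hE).resolve_left hnr
      simp [Complex.mul_im, Complex.natCast_re, Complex.natCast_im, hPre, hD]
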